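/- The map p ↦ q*(p), assigning to each p ∈ (1, ∞) the unique root in (0,1) of 2E_{1,p}(q) = K_{1,p}(q), is strictly increasing; moreover q*(p) → 1/√2 as p ↓ 1 and q*(p) → 1 as p → ∞. -/

import Mathlib

open Real Filter MeasureTheory intervalIntegral Set

/-- The complete `p`-elliptic integral of the first kind. -/
noncomputable def K1 (p q : ℝ) : ℝ :=
  ∫ z in (0:ℝ)..1, (1 - q ^ 2 * z ^ 2) ^ (-(1/2) : ℝ) * (1 - z ^ 2) ^ (-(1 / p))

/-- The complete `p`-elliptic integral of the second kind. -/
noncomputable def E1 (p q : ℝ) : ℝ :=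
  ∫ z in (0:ℝ)..1, (1 - q ^ 2 * z ^ 2) ^ ((1/2) : ℝ) * (1 - z ^ 2) ^ (-(1 / p))

noncomputable def Hfun (q z : ℝ) : ℝ :=
  2 * (1 - q ^ 2 * z ^ 2) ^ ((1/2) : ℝ) - (1 - q ^ 2 * z ^ 2) ^ (-(1/2) : ℝ)

noncomputable def Wfun (p z : ℝ) : ℝ := (1 - z ^ 2) ^ (-(1 / p))

noncomputable def Gfun (p q : ℝ) : ℝ := ∫ z in (0:ℝ)..1, Hfun q z * Wfun p z


/-- the increasing function s ↦ 2√s - 1/√s -/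
lemma phi_mono {s t : ℝ} (hs : 0 < s) (hst : s ≤ t) :
    2 * s ^ ((1/2) : ℝ) - s ^ (-(1/2) : ℝ) ≤ 2 * t ^ ((1/2) : ℝ) - t ^ (-(1/2) : ℝ) := by
  have h1 : s ^ ((1/2) : ℝ) ≤ t ^ ((1/2) : ℝ) := Real.rpow_le_rpow hs.le hst (by norm_num)
  have h2 : t ^ (-(1/2) : ℝ) ≤ s ^ (-(1/2) : ℝ) :=
    Real.rpow_le_rpow_of_nonpos hs hst (by norm_num)
  linarith

lemma Hfun_eq {q z : ℝ} (h : 0 < 1 - q ^ 2 * z ^ 2) :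
    Hfun q z = (2 * (1 - q ^ 2 * z ^ 2) - 1) / Real.sqrt (1 - q ^ 2 * z ^ 2) := by
  have hs : (0:ℝ) < Real.sqrt (1 - q ^ 2 * z ^ 2) := Real.sqrt_pos.2 h
  have h12 : (1 - q ^ 2 * z ^ 2) ^ ((1/2) : ℝ) = Real.sqrt (1 - q ^ 2 * z ^ 2) :=
    (Real.sqrt_eq_rpow _).symm
  have hneg : (1 - q ^ 2 * z ^ 2) ^ (-(1/2) : ℝ) = (Real.sqrt (1 - q ^ 2 * z ^ 2))⁻¹ := by
    rw [Real.rpow_neg h.le, h12]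
  rw [Hfun, h12, hneg]
  have hsq : Real.sqrt (1 - q ^ 2 * z ^ 2) * Real.sqrt (1 - q ^ 2 * z ^ 2)
      = 1 - q ^ 2 * z ^ 2 := Real.mul_self_sqrt h.le
  field_simp
  nlinarith [hsq]

lemma Hfun_pos {q z : ℝ} (h : 1/2 < 1 - q ^ 2 * z ^ 2) : 0 < Hfun q z := by
  rw [Hfun_eq (by linarith)]
  exact div_pos (by linarith) (Real.sqrt_pos.2 (by linarith))

lemma Hfun_neg {q z : ℝ} (h0 : 0 < 1 - q ^ 2 * z ^ 2) (h : 1 - q ^ 2 * z ^ 2 < 1/2) :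
    Hfun q z < 0 := by
  rw [Hfun_eq h0]
  exact div_neg_of_neg_of_pos (by linarith) (Real.sqrt_pos.2 h0)

/-- |H q z| ≤ (1-q²)^{-1/2} for z ∈ [0,1], q ∈ (0,1) -/
lemma Hfun_abs_le {q z : ℝ} (hq : q ∈ Set.Ioo (0:ℝ) 1) (hz : z ∈ Set.Icc (0:ℝ) 1) :
    |Hfun q z| ≤ (1 - q ^ 2) ^ (-(1/2) : ℝ) := by
  have hq2 : 0 < 1 - q ^ 2 := by nlinarith [hq.1, hq.2]
  have hz2 : z ^ 2 ≤ 1 := by nlinarith [hz.1, hz.2]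
  have hu : 1 - q ^ 2 ≤ 1 - q ^ 2 * z ^ 2 := by nlinarith [mul_le_of_le_one_right (sq_nonneg q) hz2]
  have hu1 : 1 - q ^ 2 * z ^ 2 ≤ 1 := by nlinarith [hq.1.le, hz.1]
  have hM : (1:ℝ) ≤ (1 - q ^ 2) ^ (-(1/2) : ℝ) := by
    have := Real.rpow_le_rpow_of_nonpos hq2 (show 1 - q ^ 2 ≤ (1:ℝ) by nlinarith [sq_nonneg q])
      (show (-(1/2):ℝ) ≤ 0 by norm_num)
    simpa using this
  rw [abs_le]
  constructor
  · have h1 := phi_mono hq2 hu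
    have h2 : 0 ≤ (1 - q ^ 2) ^ ((1/2) : ℝ) := (Real.rpow_pos_of_pos hq2 _).le
    have : -((1 - q ^ 2) ^ (-(1/2) : ℝ)) ≤ 2 * (1 - q ^ 2) ^ ((1/2) : ℝ) - (1 - q ^ 2) ^ (-(1/2) : ℝ) := by
      linarith
    exact this.trans h1
  · have h1 := phi_mono (lt_of_lt_of_le hq2 hu) hu1
    have : Hfun q z ≤ 2 * (1:ℝ) ^ ((1/2) : ℝ) - (1:ℝ) ^ (-(1/2) : ℝ) := h1
    simp only [Real.one_rpow] at this
    linarith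

/-- H is antitone in q (for fixed z ∈ [0,1]) and antitone in z -/
lemma Hfun_anti {q1 q2 z : ℝ} (h0 : 0 < 1 - q2 ^ 2 * z ^ 2)
    (h : q1 ^ 2 * z ^ 2 ≤ q2 ^ 2 * z ^ 2) : Hfun q2 z ≤ Hfun q1 z :=
  phi_mono h0 (by linarith)

lemma Hfun_anti_z {q z1 z2 : ℝ} (h0 : 0 < 1 - q ^ 2 * z2 ^ 2)
    (h : q ^ 2 * z1 ^ 2 ≤ q ^ 2 * z2 ^ 2) : Hfun q z2 ≤ Hfun q z1 :=
  phi_mono h0 (by linarith)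

lemma intIntegrable_one_sub_rpow {e : ℝ} (he : -1 < e) (a : ℝ) :
    IntervalIntegrable (fun z => (1 - z) ^ e) volume a 1 := by
  have h := intervalIntegral.intervalIntegrable_rpow' (r := e) he (a := 1 - a) (b := 1 - 1)
  have h2 := h.comp_sub_left 1
  simpa using h2

lemma aesm_Ioo {f : ℝ → ℝ} {a b : ℝ} (h : ContinuousOn f (Set.Ioo a b)) :
    AEStronglyMeasurable f (volume.restrict (Set.Ioc a b)) := by
  have := h.aestronglyMeasurable (μ := volume) measurableSet_Ioo
  rwa [Measure.restrict_congr_set Ioo_ae_eq_Ioc] at this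

lemma contOn_W {e : ℝ} (he : e ≠ 0) :
    ContinuousOn (fun z : ℝ => (1 - z ^ 2) ^ e) (Set.Ioo (0:ℝ) 1) := by
  apply ContinuousOn.rpow_const
  · exact (continuous_const.sub (continuous_pow 2)).continuousOn
  · intro z hz
    left
    have : 0 < 1 - z ^ 2 := by nlinarith [hz.1, hz.2]
    exact this.ne'

lemma integrable_mul_W {φ : ℝ → ℝ} (hφ : ContinuousOn φ (Set.Icc 0 1)) {e : ℝ}
    (he : -1 < e) (he0 : e < 0) :
    IntervalIntegrable (fun z => φ z * (1 - z ^ 2) ^ e) volume 0 1 := by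
  obtain ⟨x0, _, hx0⟩ := isCompact_Icc.exists_isMaxOn (Set.nonempty_Icc.2 zero_le_one) hφ.abs
  set C := |φ x0| with hCdef
  have hC0 : 0 ≤ C := abs_nonneg _
  rw [intervalIntegrable_iff_integrableOn_Ioc_of_le zero_le_one]
  have hbound : IntegrableOn (fun z => C * (1 - z) ^ e) (Set.Ioc 0 1) volume := by
    have := ((intIntegrable_one_sub_rpow he 0).const_mul C)
    rwa [intervalIntegrable_iff_integrableOn_Ioc_of_le zero_le_one] at this
  apply Integrable.mono' hbound
  · apply aesm_Ioo
    exact (hφ.mono (fun z hz => ⟨hz.1.le, hz.2.le⟩)).mul (contOn_W he0.ne)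
  · rw [ae_restrict_iff' measurableSet_Ioc]
    filter_upwards with z hz
    rcases eq_or_lt_of_le hz.2 with h1 | h1
    · rw [h1]
      norm_num [Real.zero_rpow he0.ne]
    · have hz1 : 0 < 1 - z := by linarith
      have hz2 : 0 < 1 - z ^ 2 := by nlinarith [hz.1]
      have hWpos : (0:ℝ) ≤ (1 - z ^ 2) ^ e := (Real.rpow_pos_of_pos hz2 _).le
      rw [norm_mul, Real.norm_eq_abs, Real.norm_eq_abs, abs_of_nonneg hWpos]
      have h1 : |φ z| ≤ C := hx0 ⟨hz.1.le, hz.2⟩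
      have h2 : (1 - z ^ 2) ^ e ≤ (1 - z) ^ e :=
        Real.rpow_le_rpow_of_nonpos hz1 (by nlinarith [hz.1]) he0.le
      calc |φ z| * (1 - z ^ 2) ^ e ≤ C * (1 - z ^ 2) ^ e := by
            exact mul_le_mul_of_nonneg_right h1 hWpos
        _ ≤ C * (1 - z) ^ e := mul_le_mul_of_nonneg_left h2 hC0

-- integral monotonicity from pointwise comparison on the open interval
lemma integral_mono_Ioo {f g : ℝ → ℝ} {a b : ℝ} (hab : a ≤ b)
    (hf : IntervalIntegrable f volume a b) (hg : IntervalIntegrable g volume a b)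
    (h : ∀ z ∈ Set.Ioo a b, f z ≤ g z) :
    (∫ z in a..b, f z) ≤ ∫ z in a..b, g z := by
  apply intervalIntegral.integral_mono_ae_restrict hab hf hg
  rw [Measure.restrict_congr_set (Ioo_ae_eq_Icc (μ := volume) (a := a) (b := b)).symm]
  rw [EventuallyLE, ae_restrict_iff' measurableSet_Ioo]
  filter_upwards with z hz using h z hz

-- exponent helpers
lemma exp_neg_inv {p : ℝ} (hp : 1 < p) : (-1 : ℝ) < -(1/p) ∧ -(1/p) < 0 := by
  constructor
  · have h1 : 1/p < 1 := by rw [div_lt_one (by linarith)]; linarith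
    linarith
  · have : 0 < 1/p := by positivity
    linarith

lemma contOn_base {q : ℝ} (hq : 0 ≤ q) (hq1 : q < 1) :
    ∀ z ∈ Set.Icc (0:ℝ) 1, 0 < 1 - q ^ 2 * z ^ 2 := by
  intro z hz
  have h1 : q ^ 2 < 1 := by nlinarith
  have h2 : z ^ 2 ≤ 1 := by nlinarith [hz.1, hz.2]
  nlinarith [sq_nonneg q]

lemma contOn_rpow_base {q c : ℝ} (hq : 0 ≤ q) (hq1 : q < 1) :
    ContinuousOn (fun z : ℝ => (1 - q ^ 2 * z ^ 2) ^ c) (Set.Icc 0 1) := by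
  apply ContinuousOn.rpow_const
  · fun_prop
  · exact fun z hz => Or.inl (contOn_base hq hq1 z hz).ne'

lemma contOn_Hfun {q : ℝ} (hq : 0 ≤ q) (hq1 : q < 1) :
    ContinuousOn (Hfun q) (Set.Icc 0 1) := by
  unfold Hfun
  exact (continuousOn_const.mul (contOn_rpow_base hq hq1)).sub (contOn_rpow_base hq hq1)

lemma integrable_HW {p q : ℝ} (hp : 1 < p) (hq : 0 ≤ q) (hq1 : q < 1) :
    IntervalIntegrable (fun z => Hfun q z * Wfun p z) volume 0 1 :=
  integrable_mul_W (contOn_Hfun hq hq1) (exp_neg_inv hp).1 (exp_neg_inv hp).2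

lemma integrable_EW {p q : ℝ} (hp : 1 < p) (hq : 0 ≤ q) (hq1 : q < 1) :
    IntervalIntegrable (fun z => (1 - q ^ 2 * z ^ 2) ^ ((1/2) : ℝ) * (1 - z ^ 2) ^ (-(1 / p)))
      volume 0 1 :=
  integrable_mul_W (contOn_rpow_base hq hq1) (exp_neg_inv hp).1 (exp_neg_inv hp).2

lemma integrable_KW {p q : ℝ} (hp : 1 < p) (hq : 0 ≤ q) (hq1 : q < 1) :
    IntervalIntegrable (fun z => (1 - q ^ 2 * z ^ 2) ^ (-(1/2) : ℝ) * (1 - z ^ 2) ^ (-(1 / p)))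
      volume 0 1 :=
  integrable_mul_W (contOn_rpow_base hq hq1) (exp_neg_inv hp).1 (exp_neg_inv hp).2

lemma Gfun_eq_sub {p q : ℝ} (hp : 1 < p) (hq : 0 ≤ q) (hq1 : q < 1) :
    Gfun p q = 2 * E1 p q - K1 p q := by
  unfold Gfun E1 K1
  have h1 := integrable_EW hp hq hq1
  have h2 := integrable_KW hp hq hq1
  rw [← intervalIntegral.integral_const_mul, ← intervalIntegral.integral_sub (h1.const_mul 2) h2]
  congr 1
  funext z
  unfold Hfun Wfun
  ring

lemma W_pos {p z : ℝ} (hz : z ∈ Set.Ioo (0:ℝ) 1) : 0 < Wfun p z := by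
  have : 0 < 1 - z ^ 2 := by nlinarith [hz.1, hz.2]
  exact Real.rpow_pos_of_pos this _

lemma W_ge_one {p z : ℝ} (hp : 1 < p) (hz : z ∈ Set.Ioo (0:ℝ) 1) : 1 ≤ Wfun p z := by
  have h1 : 0 < 1 - z ^ 2 := by nlinarith [hz.1, hz.2]
  have h2 : 1 - z ^ 2 ≤ 1 := by nlinarith [hz.1]
  have := Real.rpow_le_rpow_of_nonpos h1 h2 (exp_neg_inv hp).2.le
  unfold Wfun
  simpa using this

lemma Gfun_anti {p q1 q2 : ℝ} (hp : 1 < p) (hq1 : 0 ≤ q1) (h12 : q1 ≤ q2) (hq2 : q2 < 1) :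
    Gfun p q2 ≤ Gfun p q1 := by
  apply integral_mono_Ioo zero_le_one (integrable_HW hp (hq1.trans h12) hq2)
    (integrable_HW hp hq1 (lt_of_le_of_lt h12 hq2))
  intro z hz
  have h0 : 0 < 1 - q2 ^ 2 * z ^ 2 := contOn_base (hq1.trans h12) hq2 z ⟨hz.1.le, hz.2.le⟩
  have hH : Hfun q2 z ≤ Hfun q1 z :=
    Hfun_anti h0 (mul_le_mul_of_nonneg_right (by nlinarith) (sq_nonneg z))
  exact mul_le_mul_of_nonneg_right hH (W_pos hz).le

lemma root_gt {p q : ℝ} (hp : 1 < p) (hq : q ∈ Set.Ioo (0:ℝ) 1) (hG : Gfun p q = 0) :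
    1 / Real.sqrt 2 < q := by
  by_contra hle
  push_neg at hle
  have hs2 : (0:ℝ) < Real.sqrt 2 := by positivity
  have hq2 : q ^ 2 ≤ 1/2 := by
    have : q * q ≤ (1/Real.sqrt 2) * (1/Real.sqrt 2) := mul_le_mul hle hle hq.1.le (by positivity)
    have hss : Real.sqrt 2 * Real.sqrt 2 = 2 := Real.mul_self_sqrt (by norm_num)
    rw [div_mul_div_comm, one_mul, hss] at this
    nlinarith [this]
  have hpos : 0 < Gfun p q := by
    apply intervalIntegral_pos_of_pos_on (integrable_HW hp hq.1.le hq.2)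
    · intro z hz
      have hz2 : z ^ 2 < 1 := by nlinarith [hz.1, hz.2]
      have : q ^ 2 * z ^ 2 < 1/2 := by nlinarith [sq_nonneg q, hq.1]
      exact mul_pos (Hfun_pos (by linarith)) (W_pos hz)
    · norm_num
  linarith

lemma integrable_W {p : ℝ} (hp : 1 < p) : IntervalIntegrable (Wfun p) volume 0 1 := by
  have := integrable_mul_W (continuousOn_const (c := (1:ℝ))) (exp_neg_inv hp).1 (exp_neg_inv hp).2
  have heq : (fun z : ℝ => (1:ℝ) * (1 - z ^ 2) ^ (-(1/p))) = Wfun p := by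
    funext z; simp [Wfun]
  rwa [heq] at this

/-- FTC: ∫₀¹ H q z dz = √(1-q²) -/
lemma integral_Hfun {q : ℝ} (hq : 0 ≤ q) (hq1 : q < 1) :
    ∫ z in (0:ℝ)..1, Hfun q z = Real.sqrt (1 - q ^ 2) := by
  have key : ∀ z ∈ Set.uIcc (0:ℝ) 1,
      HasDerivAt (fun z => z * Real.sqrt (1 - q ^ 2 * z ^ 2)) (Hfun q z) z := by
    intro z hz
    rw [Set.uIcc_of_le zero_le_one] at hz
    have hu : 0 < 1 - q ^ 2 * z ^ 2 := contOn_base hq hq1 z hz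
    have h1 : HasDerivAt (fun z : ℝ => q ^ 2 * z ^ 2) (q ^ 2 * (2 * z)) z := by
      simpa using (hasDerivAt_pow 2 z).const_mul (q ^ 2)
    have h2 : HasDerivAt (fun z : ℝ => 1 - q ^ 2 * z ^ 2) (-(q ^ 2 * (2 * z))) z :=
      h1.const_sub 1
    have h3 : HasDerivAt (fun z : ℝ => Real.sqrt (1 - q ^ 2 * z ^ 2))
        (1 / (2 * Real.sqrt (1 - q ^ 2 * z ^ 2)) * (-(q ^ 2 * (2 * z)))) z :=
      (Real.hasDerivAt_sqrt hu.ne').comp z h2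
    have h4 : HasDerivAt (fun z => z * Real.sqrt (1 - q ^ 2 * z ^ 2))
        (1 * Real.sqrt (1 - q ^ 2 * z ^ 2) + z * (1 / (2 * Real.sqrt (1 - q ^ 2 * z ^ 2)) * (-(q ^ 2 * (2 * z))))) z :=
      (hasDerivAt_id z).mul h3
    convert h4 using 1
    have hs : 0 < Real.sqrt (1 - q ^ 2 * z ^ 2) := Real.sqrt_pos.2 hu
    have hss : Real.sqrt (1 - q ^ 2 * z ^ 2) * Real.sqrt (1 - q ^ 2 * z ^ 2)
        = 1 - q ^ 2 * z ^ 2 := Real.mul_self_sqrt hu.le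
    have h12 : (1 - q ^ 2 * z ^ 2) ^ ((1/2) : ℝ) = Real.sqrt (1 - q ^ 2 * z ^ 2) :=
      (Real.sqrt_eq_rpow _).symm
    have hneg : (1 - q ^ 2 * z ^ 2) ^ (-(1/2) : ℝ) = (Real.sqrt (1 - q ^ 2 * z ^ 2))⁻¹ := by
      rw [Real.rpow_neg hu.le, h12]
    rw [Hfun, h12, hneg]
    field_simp
    nlinarith [hss]
  have hint : IntervalIntegrable (Hfun q) volume 0 1 := by
    apply ContinuousOn.intervalIntegrable
    rw [Set.uIcc_of_le zero_le_one]
    exact contOn_Hfun hq hq1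
  have := intervalIntegral.integral_eq_sub_of_hasDerivAt key hint
  rw [this]
  norm_num

lemma integral_one_sub_rpow {p : ℝ} (hp : 1 < p) (z₁ : ℝ) (hz₁ : z₁ < 1) :
    ∫ z in z₁..1, (1 - z) ^ (-(1/p)) = (1 - z₁) ^ (1 - 1/p) / (1 - 1/p) := by
  have hc : 0 < 1 - 1/p := by
    have := (exp_neg_inv hp).1; linarith
  have h1 : (∫ z in z₁..1, (1 - z) ^ (-(1/p)))
      = ∫ x in (0:ℝ)..(1 - z₁), x ^ (-(1/p)) := by
    have := intervalIntegral.integral_comp_sub_left (a := z₁) (b := 1)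
      (fun u : ℝ => u ^ (-(1/p))) 1
    simpa using this
  rw [h1, integral_rpow (Or.inl (exp_neg_inv hp).1)]
  have h0 : (0:ℝ) ^ (-(1/p) + 1) = 0 := Real.zero_rpow (by linarith)
  rw [h0]
  ring_nf

lemma intW_le {p : ℝ} (hp : 1 < p) : ∫ z in (0:ℝ)..1, Wfun p z ≤ p / (p - 1) := by
  have hmono : (∫ z in (0:ℝ)..1, Wfun p z) ≤ ∫ z in (0:ℝ)..1, (1 - z) ^ (-(1/p)) := by
    apply integral_mono_Ioo zero_le_one (integrable_W hp)
      (intIntegrable_one_sub_rpow (exp_neg_inv hp).1 0)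
    intro z hz
    have hz1 : 0 < 1 - z := by linarith [hz.2]
    exact Real.rpow_le_rpow_of_nonpos hz1 (by nlinarith [hz.1]) (exp_neg_inv hp).2.le
  have hcomp := integral_one_sub_rpow hp 0 (by norm_num)
  rw [hcomp] at hmono
  have hc : 0 < 1 - 1/p := by have := (exp_neg_inv hp).1; linarith
  have hp0 : 0 < p := by linarith
  have heq : (1 - (0:ℝ)) ^ (1 - 1/p) / (1 - 1/p) = p / (p - 1) := by
    rw [show (1 - (0:ℝ)) = 1 by norm_num, Real.one_rpow]
    have hpne : p ≠ 0 := hp0.ne'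
    have hpm : p - 1 ≠ 0 := by intro h; rw [sub_eq_zero] at h; linarith
    field_simp
  rw [heq] at hmono
  exact hmono

lemma intW_piece_ge {p z₁ : ℝ} (hp : 1 < p) (hz₁ : z₁ ∈ Set.Ioo (0:ℝ) 1) :
    (1 - z₁) / (2 * (p - 1)) ≤ ∫ z in z₁..1, Wfun p z := by
  have hc : 0 < 1 - 1/p := by have := (exp_neg_inv hp).1; linarith
  have hp0 : 0 < p := by linarith
  have hWint : IntervalIntegrable (Wfun p) volume z₁ 1 := by
    apply (integrable_W hp).mono_set
    rw [Set.uIcc_of_le zero_le_one, Set.uIcc_of_le hz₁.2.le]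
    exact Set.Icc_subset_Icc hz₁.1.le le_rfl
  have hmono : (∫ z in z₁..1, (1/2) * (1 - z) ^ (-(1/p))) ≤ ∫ z in z₁..1, Wfun p z := by
    apply integral_mono_Ioo hz₁.2.le
      ((intIntegrable_one_sub_rpow (exp_neg_inv hp).1 z₁).const_mul (1/2)) hWint
    intro z hz
    have hz0 : 0 < z := hz₁.1.trans hz.1
    have hz1 : 0 < 1 - z := by linarith [hz.2]
    have hb : 0 < 1 - z ^ 2 := by nlinarith
    have step1 : (2 * (1 - z)) ^ (-(1/p)) ≤ (1 - z ^ 2) ^ (-(1/p)) := by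
      apply Real.rpow_le_rpow_of_nonpos hb (by nlinarith) (exp_neg_inv hp).2.le
    have step2 : (2 * (1 - z)) ^ (-(1/p))
        = (2:ℝ) ^ (-(1/p)) * (1 - z) ^ (-(1/p)) :=
      Real.mul_rpow (by norm_num) hz1.le
    have step3 : (1/2 : ℝ) ≤ (2:ℝ) ^ (-(1/p)) := by
      have h := Real.rpow_le_rpow_of_exponent_le (x := 2) (by norm_num)
        (show (-1:ℝ) ≤ -(1/p) by have := (exp_neg_inv hp).1; linarith)
      rw [Real.rpow_neg_one] at h
      linarith
    have step4 : (1/2 : ℝ) * (1 - z) ^ (-(1/p)) ≤ (2:ℝ) ^ (-(1/p)) * (1 - z) ^ (-(1/p)) :=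
      mul_le_mul_of_nonneg_right step3 (Real.rpow_pos_of_pos hz1 _).le
    calc (1/2 : ℝ) * (1 - z) ^ (-(1/p)) ≤ (2 * (1 - z)) ^ (-(1/p)) := by
          rw [step2]; exact step4
      _ ≤ (1 - z ^ 2) ^ (-(1/p)) := step1
  have hcomp : (∫ z in z₁..1, (1/2) * (1 - z) ^ (-(1/p)))
      = (1/2) * ((1 - z₁) ^ (1 - 1/p) / (1 - 1/p)) := by
    rw [intervalIntegral.integral_const_mul, integral_one_sub_rpow hp z₁ hz₁.2]
  have hlb : (1 - z₁) / (2 * (p - 1)) ≤ (1/2) * ((1 - z₁) ^ (1 - 1/p) / (1 - 1/p)) := by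
    have hz1 : 0 < 1 - z₁ := by linarith [hz₁.2]
    have hrp : 1 - z₁ ≤ (1 - z₁) ^ (1 - 1/p) := by
      have h := Real.rpow_le_rpow_of_exponent_ge (y := 1) (z := 1 - 1/p) hz1
        (by linarith [hz₁.1]) (by nlinarith [one_div_pos.mpr hp0])
      rwa [Real.rpow_one] at h
    have hfrac : (1:ℝ) / (p - 1) ≤ 1 / (1 - 1/p) := by
      rw [div_le_div_iff₀ (by linarith) hc]
      have hpp : (1 - 1/p) * p = p - 1 := by field_simp
      nlinarith [hpp, hp0]
    have hpm : (0:ℝ) < p - 1 := by linarith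
    have h1' := mul_le_mul hrp hfrac (by positivity) (Real.rpow_pos_of_pos hz1 (1 - 1/p)).le
    have e1 : (1 - z₁) * (1 / (p - 1)) = (1 - z₁) / (p - 1) := by ring
    have e2 : (1 - z₁) ^ (1 - 1/p) * (1 / (1 - 1/p)) = (1 - z₁) ^ (1 - 1/p) / (1 - 1/p) := by
      ring
    rw [e1, e2] at h1'
    have e3 : (1 - z₁) / (2 * (p - 1)) = (1/2) * ((1 - z₁) / (p - 1)) := by
      field_simp
    rw [e3]
    linarith
  rw [hcomp] at hmono
  linarith

lemma integrable_H {q : ℝ} (hq : 0 ≤ q) (hq1 : q < 1) :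
    IntervalIntegrable (Hfun q) volume 0 1 := by
  apply ContinuousOn.intervalIntegrable
  rw [Set.uIcc_of_le zero_le_one]
  exact contOn_Hfun hq hq1

lemma G_lower {p q : ℝ} (hp : 1 < p) (hq : q ∈ Set.Ioo (0:ℝ) 1) :
    Real.sqrt (1 - q ^ 2) - (1 - q ^ 2) ^ (-(1/2) : ℝ) / (p - 1) ≤ Gfun p q := by
  set M := (1 - q ^ 2) ^ (-(1/2) : ℝ) with hM
  have hq2 : 0 < 1 - q ^ 2 := by nlinarith [hq.1, hq.2]
  have hM0 : 0 ≤ M := (Real.rpow_pos_of_pos hq2 _).le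
  have hp1 : 0 < p - 1 := by linarith
  have hHW := integrable_HW hp hq.1.le hq.2
  have hH := integrable_H hq.1.le hq.2
  have hHW1 : IntervalIntegrable (fun z => Hfun q z * (Wfun p z - 1)) volume 0 1 := by
    have := hHW.sub hH
    have heq : (fun z => Hfun q z * Wfun p z - Hfun q z)
        = fun z => Hfun q z * (Wfun p z - 1) := by funext z; ring
    rwa [heq] at this
  have hsplit : Gfun p q = (∫ z in (0:ℝ)..1, Hfun q z)
      + ∫ z in (0:ℝ)..1, Hfun q z * (Wfun p z - 1) := by
    rw [← intervalIntegral.integral_add hH hHW1]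
    unfold Gfun
    congr 1; funext z; ring
  have habs : |∫ z in (0:ℝ)..1, Hfun q z * (Wfun p z - 1)| ≤ M / (p - 1) := by
    have h1 := intervalIntegral.abs_integral_le_integral_abs
      (μ := volume) (f := fun z => Hfun q z * (Wfun p z - 1)) (a := (0:ℝ)) (b := 1) zero_le_one
    have h2 : (∫ z in (0:ℝ)..1, |Hfun q z * (Wfun p z - 1)|)
        ≤ ∫ z in (0:ℝ)..1, M * (Wfun p z - 1) := by
      apply integral_mono_Ioo zero_le_one hHW1.abs
        (((integrable_W hp).sub (intervalIntegrable_const)).const_mul M)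
      intro z hz
      have hW1 : 0 ≤ Wfun p z - 1 := by linarith [W_ge_one hp hz]
      rw [abs_mul, abs_of_nonneg hW1]
      exact mul_le_mul_of_nonneg_right (Hfun_abs_le hq ⟨hz.1.le, hz.2.le⟩) hW1
    have h3 : (∫ z in (0:ℝ)..1, M * (Wfun p z - 1))
        = M * ((∫ z in (0:ℝ)..1, Wfun p z) - 1) := by
      rw [intervalIntegral.integral_const_mul,
        intervalIntegral.integral_sub (integrable_W hp) intervalIntegrable_const]
      simp
    have h4 : (∫ z in (0:ℝ)..1, Wfun p z) - 1 ≤ 1 / (p - 1) := by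
      have := intW_le hp
      have : p / (p - 1) - 1 = 1 / (p - 1) := by field_simp; ring
      linarith [intW_le hp]
    have h5 : M * ((∫ z in (0:ℝ)..1, Wfun p z) - 1) ≤ M * (1 / (p - 1)) :=
      mul_le_mul_of_nonneg_left h4 hM0
    have h6 : M * (1 / (p - 1)) = M / (p - 1) := by ring
    linarith [h1, h2, h3 ▸ h2]
  rw [hsplit, integral_Hfun hq.1.le hq.2]
  have := abs_le.1 habs
  linarith [this.1]

lemma G_upper {p q z₁ : ℝ} (hp : 1 < p) (hq : q ∈ Set.Ioo (0:ℝ) 1)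
    (hz₁ : z₁ ∈ Set.Ioo (0:ℝ) 1) (hhalf : 1/2 < q ^ 2 * z₁ ^ 2) :
    Gfun p q ≤ (1 - q ^ 2) ^ (-(1/2) : ℝ) * z₁ * (1 - z₁ ^ 2)⁻¹
      + Hfun q z₁ * ((1 - z₁) / (2 * (p - 1))) := by
  set M := (1 - q ^ 2) ^ (-(1/2) : ℝ) with hM
  have hq2 : 0 < 1 - q ^ 2 := by nlinarith [hq.1, hq.2]
  have hM0 : 0 ≤ M := (Real.rpow_pos_of_pos hq2 _).le
  have hp1 : 0 < p - 1 := by linarith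
  have hz₁2 : 0 < 1 - z₁ ^ 2 := by nlinarith [hz₁.1, hz₁.2]
  have hHW := integrable_HW hp hq.1.le hq.2
  have hi1 : IntervalIntegrable (fun z => Hfun q z * Wfun p z) volume 0 z₁ := by
    apply hHW.mono_set
    rw [Set.uIcc_of_le zero_le_one, Set.uIcc_of_le hz₁.1.le]
    exact Set.Icc_subset_Icc le_rfl hz₁.2.le
  have hi2 : IntervalIntegrable (fun z => Hfun q z * Wfun p z) volume z₁ 1 := by
    apply hHW.mono_set
    rw [Set.uIcc_of_le zero_le_one, Set.uIcc_of_le hz₁.2.le]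
    exact Set.Icc_subset_Icc hz₁.1.le le_rfl
  have hWi2 : IntervalIntegrable (Wfun p) volume z₁ 1 := by
    apply (integrable_W hp).mono_set
    rw [Set.uIcc_of_le zero_le_one, Set.uIcc_of_le hz₁.2.le]
    exact Set.Icc_subset_Icc hz₁.1.le le_rfl
  have hsplit : Gfun p q = (∫ z in (0:ℝ)..z₁, Hfun q z * Wfun p z)
      + ∫ z in z₁..1, Hfun q z * Wfun p z :=
    (intervalIntegral.integral_add_adjacent_intervals hi1 hi2).symm
  have hpart1 : (∫ z in (0:ℝ)..z₁, Hfun q z * Wfun p z) ≤ M * z₁ * (1 - z₁ ^ 2)⁻¹ := by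
    have hmono : (∫ z in (0:ℝ)..z₁, Hfun q z * Wfun p z)
        ≤ ∫ z in (0:ℝ)..z₁, M * (1 - z₁ ^ 2)⁻¹ := by
      apply integral_mono_Ioo hz₁.1.le hi1 intervalIntegrable_const
      intro z hz
      have hzI : z ∈ Set.Ioo (0:ℝ) 1 := ⟨hz.1, hz.2.trans hz₁.2⟩
      have hWp : 0 < Wfun p z := W_pos hzI
      have hHle : Hfun q z ≤ M :=
        (le_abs_self _).trans (Hfun_abs_le hq ⟨hzI.1.le, hzI.2.le⟩)
      have hWle : Wfun p z ≤ (1 - z₁ ^ 2)⁻¹ := by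
        have hb : 0 < 1 - z ^ 2 := by nlinarith [hzI.1, hzI.2]
        have s1 : Wfun p z ≤ (1 - z₁ ^ 2) ^ (-(1/p)) := by
          apply Real.rpow_le_rpow_of_nonpos hz₁2 (by nlinarith [hz.1, hz.2, hz₁.1])
            (exp_neg_inv hp).2.le
        have s2 : (1 - z₁ ^ 2) ^ (-(1/p)) ≤ (1 - z₁ ^ 2) ^ (-1 : ℝ) := by
          apply Real.rpow_le_rpow_of_exponent_ge hz₁2 (by nlinarith [hz₁.1])
          have := (exp_neg_inv hp).1; linarith
        have s3 : (1 - z₁ ^ 2) ^ (-1 : ℝ) = (1 - z₁ ^ 2)⁻¹ := Real.rpow_neg_one _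
        linarith [s1, s2, s3 ▸ s2]
      calc Hfun q z * Wfun p z ≤ M * Wfun p z := mul_le_mul_of_nonneg_right hHle hWp.le
        _ ≤ M * (1 - z₁ ^ 2)⁻¹ := mul_le_mul_of_nonneg_left hWle hM0
    have : (∫ z in (0:ℝ)..z₁, M * (1 - z₁ ^ 2)⁻¹) = z₁ * (M * (1 - z₁ ^ 2)⁻¹) := by
      simp
      ring
    rw [this] at hmono
    linarith [hmono]
  have hpart2 : (∫ z in z₁..1, Hfun q z * Wfun p z)
      ≤ Hfun q z₁ * ((1 - z₁) / (2 * (p - 1))) := by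
    have hH1 : Hfun q z₁ < 0 := by
      have h0 : 0 < 1 - q ^ 2 * z₁ ^ 2 :=
        contOn_base hq.1.le hq.2 z₁ ⟨hz₁.1.le, hz₁.2.le⟩
      exact Hfun_neg h0 (by linarith)
    have hmono : (∫ z in z₁..1, Hfun q z * Wfun p z)
        ≤ ∫ z in z₁..1, Hfun q z₁ * Wfun p z := by
      apply integral_mono_Ioo hz₁.2.le hi2 (hWi2.const_mul _)
      intro z hz
      have hzI : z ∈ Set.Ioo (0:ℝ) 1 := ⟨hz₁.1.trans hz.1, hz.2⟩
      have h0 : 0 < 1 - q ^ 2 * z ^ 2 :=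
        contOn_base hq.1.le hq.2 z ⟨hzI.1.le, hzI.2.le⟩
      have hHle : Hfun q z ≤ Hfun q z₁ := by
        apply Hfun_anti_z h0
        have : z₁ ^ 2 ≤ z ^ 2 := by nlinarith [hz.1, hz₁.1]
        nlinarith [sq_nonneg q]
      exact mul_le_mul_of_nonneg_right hHle (W_pos hzI).le
    have heq : (∫ z in z₁..1, Hfun q z₁ * Wfun p z)
        = Hfun q z₁ * ∫ z in z₁..1, Wfun p z := intervalIntegral.integral_const_mul _ _
    have hle : Hfun q z₁ * (∫ z in z₁..1, Wfun p z)
        ≤ Hfun q z₁ * ((1 - z₁) / (2 * (p - 1))) := by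
      apply mul_le_mul_of_nonpos_left (intW_piece_ge hp hz₁) hH1.le
    rw [heq] at hmono
    linarith
  linarith [hsplit, hpart1, hpart2, hsplit ▸ le_refl (Gfun p q)]

lemma W_split {p p' e z : ℝ} (he : e = 1/p - 1/p') (hz : z ∈ Set.Ioo (0:ℝ) 1) :
    Wfun p' z = Wfun p z * (1 - z ^ 2) ^ e := by
  have hb : 0 < 1 - z ^ 2 := by nlinarith [hz.1, hz.2]
  rw [he]
  unfold Wfun
  rw [← Real.rpow_add hb]
  congr 1
  ring

set_option maxHeartbeats 1000000 in
lemma crossP {p p' q : ℝ} (hp' : 1 < p') (hpp : p' < p) (hq : q ∈ Set.Ioo (0:ℝ) 1)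
    (hq2 : 1 / Real.sqrt 2 < q) (hG : Gfun p q = 0) : Gfun p' q < 0 := by
  have hp : 1 < p := hp'.trans hpp
  have hs2 : (0:ℝ) < Real.sqrt 2 := by positivity
  have hss : Real.sqrt 2 * Real.sqrt 2 = 2 := Real.mul_self_sqrt (by norm_num)
  obtain ⟨z₀, hz₀def⟩ : ∃ z₀ : ℝ, z₀ = 1 / (Real.sqrt 2 * q) := ⟨_, rfl⟩
  have hq0 : 0 < q := hq.1
  have hz₀pos : 0 < z₀ := by rw [hz₀def]; positivity
  have hz₀lt : z₀ < 1 := by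
    rw [hz₀def]
    rw [div_lt_one (by positivity)]
    calc (1:ℝ) = Real.sqrt 2 * (1 / Real.sqrt 2) := by field_simp
      _ < Real.sqrt 2 * q := by
          exact mul_lt_mul_of_pos_left hq2 hs2
  have hz₀I : z₀ ∈ Set.Ioo (0:ℝ) 1 := ⟨hz₀pos, hz₀lt⟩
  have hz₀sq : q ^ 2 * z₀ ^ 2 = 1/2 := by
    rw [hz₀def]
    field_simp
    nlinarith [hss]
  obtain ⟨e, hedef⟩ : ∃ e : ℝ, e = 1/p - 1/p' := ⟨_, rfl⟩
  have hppos : (0:ℝ) < p := by linarith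
  have hp'pos : (0:ℝ) < p' := by linarith
  have he_neg : e < 0 := by
    have := one_div_lt_one_div_of_lt hp'pos hpp
    rw [hedef]
    linarith
  have he_gt : -1 < e := by
    have h1 : 1/p' < 1 := by rw [div_lt_one hp'pos]; linarith
    have h2 : 0 < 1/p := by positivity
    rw [hedef]
    linarith
  have hz₀b : 0 < 1 - z₀ ^ 2 := by nlinarith [hz₀pos, hz₀lt]
  obtain ⟨c, hcdef⟩ : ∃ c : ℝ, c = (1 - z₀ ^ 2) ^ e := ⟨_, rfl⟩
  have hc0 : 0 < c := hcdef ▸ Real.rpow_pos_of_pos hz₀b _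
  -- the difference function
  obtain ⟨D, hDdef⟩ : ∃ D : ℝ → ℝ,
      D = fun z => Hfun q z * Wfun p' z - c * (Hfun q z * Wfun p z) := ⟨_, rfl⟩
  have hD1 := integrable_HW hp' hq.1.le hq.2
  have hD2 := (integrable_HW hp hq.1.le hq.2).const_mul c
  have hD : IntervalIntegrable D volume 0 1 := by rw [hDdef]; exact hD1.sub hD2
  have hGp : (∫ x in (0:ℝ)..1, Hfun q x * Wfun p x) = 0 := hG
  have hval : (∫ z in (0:ℝ)..1, D z) = Gfun p' q := by
    rw [hDdef]
    simp only []
    rw [intervalIntegral.integral_sub hD1 hD2, intervalIntegral.integral_const_mul, hGp]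
    unfold Gfun
    ring
  -- sign of D on the two pieces
  have hDsign : ∀ z ∈ Set.Ioo (0:ℝ) 1, z ≠ z₀ → D z < 0 := by
    intro z hz hne
    have hb : 0 < 1 - z ^ 2 := by nlinarith [hz.1, hz.2]
    have hWp : 0 < Wfun p z := W_pos hz
    have hDz : D z = Hfun q z * Wfun p z * ((1 - z ^ 2) ^ e - c) := by
      rw [hDdef]
      simp only []
      rw [W_split (p := p) hedef hz]
      ring
    rcases lt_or_gt_of_ne hne with hlt | hgt
    · -- z < z₀ : H > 0, r < c
      have hH : 0 < Hfun q z := by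
        apply Hfun_pos
        have hzz : z ^ 2 < z₀ ^ 2 := by nlinarith [hz.1]
        have hq2p : 0 < q ^ 2 := pow_pos hq0 2
        have : q ^ 2 * z ^ 2 < q ^ 2 * z₀ ^ 2 := by
          exact mul_lt_mul_of_pos_left hzz hq2p
        linarith [hz₀sq]
      have hr : (1 - z ^ 2) ^ e < c := by
        rw [hcdef]
        apply Real.rpow_lt_rpow_of_neg hz₀b (by nlinarith [hz.1, hlt]) he_neg
      rw [hDz]
      exact mul_neg_of_pos_of_neg (mul_pos hH hWp) (by linarith)
    · -- z > z₀ : H < 0, r > c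
      have hH : Hfun q z < 0 := by
        apply Hfun_neg (contOn_base hq.1.le hq.2 z ⟨hz.1.le, hz.2.le⟩)
        have hzz : z₀ ^ 2 < z ^ 2 := by nlinarith [hz₀pos]
        have hq2p : 0 < q ^ 2 := pow_pos hq0 2
        have : q ^ 2 * z₀ ^ 2 < q ^ 2 * z ^ 2 := mul_lt_mul_of_pos_left hzz hq2p
        linarith [hz₀sq]
      have hr : c < (1 - z ^ 2) ^ e := by
        rw [hcdef]
        apply Real.rpow_lt_rpow_of_neg hb (by nlinarith [hz₀pos, hgt]) he_neg
      rw [hDz]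
      exact mul_neg_of_neg_of_pos (mul_neg_of_neg_of_pos hH hWp) (by linarith)
  -- split and conclude
  have hDi1 : IntervalIntegrable D volume 0 z₀ := by
    apply hD.mono_set
    rw [Set.uIcc_of_le zero_le_one, Set.uIcc_of_le hz₀pos.le]
    exact Set.Icc_subset_Icc le_rfl hz₀lt.le
  have hDi2 : IntervalIntegrable D volume z₀ 1 := by
    apply hD.mono_set
    rw [Set.uIcc_of_le zero_le_one, Set.uIcc_of_le hz₀lt.le]
    exact Set.Icc_subset_Icc hz₀pos.le le_rfl
  have hneg1 : (∫ z in (0:ℝ)..z₀, D z) < 0 := by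
    have hpos : 0 < ∫ z in (0:ℝ)..z₀, -D z := by
      apply intervalIntegral_pos_of_pos_on hDi1.neg
      · intro z hz
        have : D z < 0 := hDsign z ⟨hz.1, hz.2.trans hz₀lt⟩ (ne_of_lt hz.2)
        exact neg_pos.2 this
      · exact hz₀pos
    rw [intervalIntegral.integral_neg] at hpos
    linarith
  have hneg2 : (∫ z in z₀..1, D z) < 0 := by
    have hpos : 0 < ∫ z in z₀..1, -D z := by
      apply intervalIntegral_pos_of_pos_on hDi2.neg
      · intro z hz
        have : D z < 0 := hDsign z ⟨hz₀pos.trans hz.1, hz.2⟩ (ne_of_gt hz.1)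
        exact neg_pos.2 this
      · exact hz₀lt
    rw [intervalIntegral.integral_neg] at hpos
    linarith
  have := intervalIntegral.integral_add_adjacent_intervals hDi1 hDi2
  rw [← hval, ← this]
  linarith

set_option maxHeartbeats 1000000 in
theorem qstar_strictMono_and_limits (f : ℝ → ℝ)
    (hf : ∀ p, 1 < p → f p ∈ Set.Ioo (0:ℝ) 1 ∧ 2 * E1 p (f p) = K1 p (f p)) :
    StrictMonoOn f (Set.Ioi (1:ℝ)) ∧
    Tendsto f (nhdsWithin 1 (Set.Ioi 1)) (nhds (1 / Real.sqrt 2)) ∧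
    Tendsto f atTop (nhds 1) := by
  have hmem : ∀ p, 1 < p → f p ∈ Set.Ioo (0:ℝ) 1 := fun p hp => (hf p hp).1
  have hG0 : ∀ p, 1 < p → Gfun p (f p) = 0 := by
    intro p hp
    rw [Gfun_eq_sub hp (hmem p hp).1.le (hmem p hp).2]
    linarith [(hf p hp).2]
  have hroot : ∀ p, 1 < p → 1 / Real.sqrt 2 < f p := fun p hp =>
    root_gt hp (hmem p hp) (hG0 p hp)
  have key_lt : ∀ p q, 1 < p → 0 ≤ q → q < 1 → 0 < Gfun p q → q < f p := by
    intro p q hp hq0 hq1 hpos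
    by_contra hle
    push_neg at hle
    have h := Gfun_anti hp (hmem p hp).1.le hle hq1
    rw [hG0 p hp] at h
    linarith
  have key_gt : ∀ p q, 1 < p → 0 ≤ q → Gfun p q < 0 → f p < q := by
    intro p q hp hq0 hneg
    by_contra hle
    push_neg at hle
    have h := Gfun_anti hp hq0 hle (hmem p hp).2
    rw [hG0 p hp] at h
    linarith
  have hs2 : (0:ℝ) < Real.sqrt 2 := by positivity
  have hss : Real.sqrt 2 * Real.sqrt 2 = 2 := Real.mul_self_sqrt (by norm_num)
  have hs2gt : 1 < Real.sqrt 2 := by nlinarith [hs2]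
  have hinv2 : 0 < 1 / Real.sqrt 2 := by positivity
  have hinv2lt : 1 / Real.sqrt 2 < 1 := by rw [div_lt_one hs2]; exact hs2gt
  refine ⟨?_, ?_, ?_⟩
  · -- strict monotonicity
    intro a ha b hb hab
    simp only [Set.mem_Ioi] at ha hb
    by_contra hle
    push_neg at hle
    have hcross : Gfun a (f b) < 0 := crossP ha hab (hmem b hb) (hroot b hb) (hG0 b hb)
    have h := Gfun_anti ha (hmem b hb).1.le hle (hmem a ha).2
    rw [hG0 a ha] at h
    linarith
  · -- limit p → 1⁺
    rw [tendsto_order]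
    constructor
    · intro b hb
      filter_upwards [self_mem_nhdsWithin] with p hp
      exact hb.trans (hroot p hp)
    · intro b hb
      -- choose q strictly between 1/√2 and min b 1
      obtain ⟨q, hqdef⟩ : ∃ q : ℝ, q = (1 / Real.sqrt 2 + min b 1) / 2 := ⟨_, rfl⟩
      have hminlt : 1 / Real.sqrt 2 < min b 1 := lt_min hb hinv2lt
      have hq_gt : 1 / Real.sqrt 2 < q := by rw [hqdef]; linarith
      have hq_lt_min : q < min b 1 := by rw [hqdef]; linarith
      have hq1 : q < 1 := hq_lt_min.trans_le (min_le_right _ _)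
      have hqb : q < b := hq_lt_min.trans_le (min_le_left _ _)
      have hq0 : 0 < q := hinv2.trans hq_gt
      have hqI : q ∈ Set.Ioo (0:ℝ) 1 := ⟨hq0, hq1⟩
      -- z₀ and z₁
      obtain ⟨z₀, hz₀def⟩ : ∃ z₀ : ℝ, z₀ = 1 / (Real.sqrt 2 * q) := ⟨_, rfl⟩
      have hz₀pos : 0 < z₀ := by rw [hz₀def]; positivity
      have hz₀lt : z₀ < 1 := by
        rw [hz₀def]
        rw [div_lt_one (by positivity)]
        calc (1:ℝ) = Real.sqrt 2 * (1 / Real.sqrt 2) := by field_simp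
          _ < Real.sqrt 2 * q := mul_lt_mul_of_pos_left hq_gt hs2
      have hz₀sq : q ^ 2 * z₀ ^ 2 = 1/2 := by
        rw [hz₀def]
        field_simp
        nlinarith [hss]
      obtain ⟨z₁, hz₁def⟩ : ∃ z₁ : ℝ, z₁ = (z₀ + 1) / 2 := ⟨_, rfl⟩
      have hz₁I : z₁ ∈ Set.Ioo (0:ℝ) 1 := by
        constructor
        · rw [hz₁def]; linarith
        · rw [hz₁def]; linarith
      have hz₀z₁ : z₀ < z₁ := by rw [hz₁def]; linarith
      have hhalf : 1/2 < q ^ 2 * z₁ ^ 2 := by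
        have hzz : z₀ ^ 2 < z₁ ^ 2 := by nlinarith [hz₀pos, hz₀z₁]
        have := mul_lt_mul_of_pos_left hzz (pow_pos hq0 2)
        linarith [hz₀sq]
      -- constants
      obtain ⟨C, hCdef⟩ : ∃ C : ℝ, C = (1 - q ^ 2) ^ (-(1/2) : ℝ) * z₁ * (1 - z₁ ^ 2)⁻¹ :=
        ⟨_, rfl⟩
      have hq2 : 0 < 1 - q ^ 2 := by nlinarith [hq0, hq1]
      have hz₁2 : 0 < 1 - z₁ ^ 2 := by nlinarith [hz₁I.1, hz₁I.2]
      have hC0 : 0 < C := by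
        rw [hCdef]
        exact mul_pos (mul_pos (Real.rpow_pos_of_pos hq2 _) hz₁I.1) (inv_pos.2 hz₁2)
      have hδ : Hfun q z₁ < 0 := by
        apply Hfun_neg (contOn_base hq0.le hq1 z₁ ⟨hz₁I.1.le, hz₁I.2.le⟩)
        linarith
      obtain ⟨a, hadef⟩ : ∃ a : ℝ, a = -Hfun q z₁ := ⟨_, rfl⟩
      have ha0 : 0 < a := by rw [hadef]; linarith
      obtain ⟨ε, hεdef⟩ : ∃ ε : ℝ, ε = a * (1 - z₁) / (2 * (C + 1)) := ⟨_, rfl⟩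
      have hw : 0 < 1 - z₁ := by linarith [hz₁I.2]
      have hε0 : 0 < ε := by rw [hεdef]; positivity
      filter_upwards [Ioo_mem_nhdsGT_of_mem (Set.mem_Ico.2 ⟨le_refl 1, by linarith⟩ : (1:ℝ) ∈ Set.Ico 1 (1 + ε))]
        with p hp
      have hp1 : 1 < p := hp.1
      have hpm : 0 < p - 1 := by linarith
      have hub := G_upper hp1 hqI hz₁I hhalf
      rw [← hCdef] at hub
      have hGneg : Gfun p q < 0 := by
        have hclt : C < a * ((1 - z₁) / (2 * (p - 1))) := by
          have h1 : (p - 1) * (2 * (C + 1)) < a * (1 - z₁) := by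
            have h2 : p - 1 < ε := by linarith [hp.2]
            rw [hεdef] at h2
            rw [lt_div_iff₀ (by positivity)] at h2
            linarith
          rw [show a * ((1 - z₁) / (2 * (p - 1))) = a * (1 - z₁) / (2 * (p - 1)) by ring]
          rw [lt_div_iff₀ (by positivity)]
          have h3 : C * (2 * (p - 1)) + 2 * (p - 1) = (p - 1) * (2 * (C + 1)) := by ring
          linarith
        have : Hfun q z₁ * ((1 - z₁) / (2 * (p - 1)))
            = -(a * ((1 - z₁) / (2 * (p - 1)))) := by rw [hadef]; ring
        rw [this] at hub
        linarith
      have := key_gt p q hp1 hq0.le hGneg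
      linarith
  · -- limit p → ∞
    rw [tendsto_order]
    constructor
    · intro b hb
      rcases le_or_gt b 0 with h0 | h0
      · filter_upwards [eventually_gt_atTop (1:ℝ)] with p hp
        exact lt_of_le_of_lt h0 (hmem p hp).1
      · have hb1 : b < 1 := hb
        have hbI : b ∈ Set.Ioo (0:ℝ) 1 := ⟨h0, hb1⟩
        have hb2 : 0 < 1 - b ^ 2 := by nlinarith
        obtain ⟨δ, hδdef⟩ : ∃ δ : ℝ, δ = Real.sqrt (1 - b ^ 2) := ⟨_, rfl⟩
        obtain ⟨M, hMdef⟩ : ∃ M : ℝ, M = (1 - b ^ 2) ^ (-(1/2) : ℝ) := ⟨_, rfl⟩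
        have hδ0 : 0 < δ := by rw [hδdef]; positivity
        have hM0 : 0 < M := by rw [hMdef]; exact Real.rpow_pos_of_pos hb2 _
        filter_upwards [eventually_ge_atTop (1 + M / δ + 1)] with p hp
        have hp1 : 1 < p := by
          have : 0 ≤ M / δ := by positivity
          linarith
        have hpm : 0 < p - 1 := by linarith
        have hlow := G_lower hp1 hbI
        rw [← hMdef, ← hδdef] at hlow
        have hfrac : M / (p - 1) < δ := by
          rw [div_lt_iff₀ hpm]
          have h1 : M / δ + 1 ≤ p - 1 := by linarith
          have h2 : δ * (M / δ) = M := by field_simp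
          nlinarith [h1, h2, hδ0, hM0]
        have hGpos : 0 < Gfun p b := by linarith
        exact key_lt p b hp1 h0.le hb1 hGpos
    · intro b hb
      filter_upwards [eventually_gt_atTop (1:ℝ)] with p hp
      exact (hmem p hp).2.trans hb
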